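/- Let L and T be even positive integers with L ≥ T − 2. Consider FITS models without a low-pass filter: for a complex ((L+T)/2 + 1) × (L/2 + 1) matrix W and a complex vector c ∈ ℂ^{(L+T)/2+1}, the model maps x ∈ ℝ^L to the last T coordinates of iRFT_{L+T}(W·RFT_L(x) + c) ∈ ℂ^{L+T}. Then: (i) for every such W and c, the output vector has all real coordinates and the resulting map ℝ^L → ℝ^T equals x ↦ Ax + b for some real T×L matrix A and some b ∈ ℝ^T; and (ii) conversely, for every real T×L matrix A and every b ∈ ℝ^T there exist W and c such that the FITS model equals x ↦ Ax + b. Hence the FITS model class is exactly the set of all affine maps ℝ^L → ℝ^T. -/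

import Mathlib

/-- The (unnormalised) discrete Fourier transform matrix `D_N`,
with entries `(D_N)_{jk} = exp(−2πi·jk/N)`. -/
noncomputable def Dmat (N : ℕ) : Matrix (Fin N) (Fin N) ℂ :=
  Matrix.of fun j k =>
    Complex.exp (-(2 * (Real.pi : ℂ) * Complex.I * (j : ℕ) * (k : ℕ)) / N)

/-- The inverse DFT matrix `D_N⁻¹ = (1/N)·D_N^*`. -/
noncomputable def DmatInv (N : ℕ) : Matrix (Fin N) (Fin N) ℂ :=
  ((N : ℂ)⁻¹) • (Dmat N).conjTranspose

/-- The projection `Π_N : ℂ^N → ℂ^{N/2+1}` for even `N = 2·(m+1)`,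
`Π_N(Y_0,…,Y_{N−1}) = (Y_0,…,Y_{N/2})`. -/
def PiProj (m : ℕ) (Y : Fin (2 * (m + 1)) → ℂ) : Fin (m + 2) → ℂ :=
  fun j => Y ⟨j.val, by have := j.isLt; omega⟩

/-- The map `Π_N⁻¹ : ℂ^{N/2+1} → ℂ^N` for even `N = 2·(m+1)`,
`Π_N⁻¹(Y_0,…,Y_{N/2}) = (Re Y_0, Y_1, …, Y_{N/2−1}, Re Y_{N/2}, conj Y_{N/2−1}, …, conj Y_1)`. -/
noncomputable def PiInv (m : ℕ) (Y : Fin (m + 2) → ℂ) : Fin (2 * (m + 1)) → ℂ :=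
  fun i =>
    if h1 : i.val = 0 then ((Y ⟨0, by omega⟩).re : ℂ)
    else if h2 : i.val < m + 1 then Y ⟨i.val, by omega⟩
    else if h3 : i.val = m + 1 then ((Y ⟨m + 1, by omega⟩).re : ℂ)
    else (starRingEnd ℂ) (Y ⟨2 * (m + 1) - i.val, by have := i.isLt; omega⟩)

/-- The real discrete Fourier transform `RFT_N = Π_N ∘ D_N` for even `N = 2·(m+1)`. -/
noncomputable def RFT (m : ℕ) (x : Fin (2 * (m + 1)) → ℂ) : Fin (m + 2) → ℂ :=
  PiProj m ((Dmat (2 * (m + 1))).mulVec x)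

/-- The inverse real discrete Fourier transform `iRFT_N = D_N⁻¹ ∘ Π_N⁻¹`
for even `N = 2·(m+1)`. -/
noncomputable def iRFT (m : ℕ) (c : Fin (m + 2) → ℂ) : Fin (2 * (m + 1)) → ℂ :=
  (DmatInv (2 * (m + 1))).mulVec (PiInv m c)

/-- The FITS model (without low-pass filter), for `L = 2·(a+1)` and `T = 2·(b+1)`:
`x ↦ iRFT_{L+T}(W·RFT_L(x) + c) ∈ ℂ^{L+T}`.  Here `L+T = 2·((a+b+1)+1)`. -/
noncomputable def fits (a b : ℕ) (W : Matrix (Fin (a + b + 3)) (Fin (a + 2)) ℂ)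
    (c : Fin (a + b + 3) → ℂ) (x : Fin (2 * (a + 1)) → ℝ) : Fin (2 * (a + b + 2)) → ℂ :=
  iRFT (a + b + 1) (W.mulVec (RFT a fun k => (x k : ℂ)) + c)

/-- The forecast of the FITS model: the last `T = 2·(b+1)` coordinates of `fits`. -/
noncomputable def fitsT (a b : ℕ) (W : Matrix (Fin (a + b + 3)) (Fin (a + 2)) ℂ)
    (c : Fin (a + b + 3) → ℂ) (x : Fin (2 * (a + 1)) → ℝ) : Fin (2 * (b + 1)) → ℂ :=
  fun t => fits a b W c x ⟨2 * (a + 1) + t.val, by have := t.isLt; omega⟩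


open Complex Finset

noncomputable def zet (M : ℕ) : ℂ := Complex.exp (2 * Real.pi * Complex.I / M)

lemma zet_ne_zero (M : ℕ) : zet M ≠ 0 := Complex.exp_ne_zero _

lemma zet_prim (M : ℕ) (hM : M ≠ 0) : IsPrimitiveRoot (zet M) M :=
  Complex.isPrimitiveRoot_exp M hM

lemma zet_zpow_eq_one_iff (M : ℕ) (hM : M ≠ 0) (d : ℤ) :
    zet M ^ d = 1 ↔ (M : ℤ) ∣ d :=
  (zet_prim M hM).zpow_eq_one_iff_dvd d

lemma zet_zpow_dvd (M : ℕ) (hM : M ≠ 0) {d e : ℤ} (h : (M:ℤ) ∣ d - e) :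
    zet M ^ d = zet M ^ e := by
  have : zet M ^ (d - e) = 1 := (zet_zpow_eq_one_iff M hM _).2 h
  have h2 := zpow_add₀ (zet_ne_zero M) (d - e) e
  rw [sub_add_cancel] at h2
  rw [h2, this, one_mul]

lemma conj_zet_zpow (M : ℕ) (d : ℤ) : (starRingEnd ℂ) (zet M ^ d) = zet M ^ (-d) := by
  have hc : (starRingEnd ℂ) (zet M) = (zet M)⁻¹ := by
    rw [zet, ← Complex.exp_conj, ← Complex.exp_neg]
    congr 1
    simp [map_div₀]
    ring_nf
    simp [map_ofNat]
    ring
  rw [map_zpow₀, hc, inv_zpow, ← zpow_neg]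

lemma Dmat_apply (M : ℕ) (j k : Fin M) :
    Dmat M j k = zet M ^ (-((j.val : ℤ) * (k.val : ℤ))) := by
  rw [Dmat, Matrix.of_apply, zet, ← Complex.exp_int_mul]
  congr 1
  push_cast
  ring

lemma DmatInv_apply (M : ℕ) (j k : Fin M) :
    DmatInv M j k = (M:ℂ)⁻¹ * zet M ^ ((j.val : ℤ) * (k.val : ℤ)) := by
  rw [DmatInv, Matrix.smul_apply, Matrix.conjTranspose_apply, smul_eq_mul]
  congr 1
  rw [show (star (Dmat M k j) : ℂ) = (starRingEnd ℂ) (Dmat M k j) from rfl,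
    Dmat_apply, conj_zet_zpow, neg_neg]
  ring_nf

lemma zet_sum (M : ℕ) (hM : M ≠ 0) (d : ℤ) :
    ∑ k ∈ Finset.range M, zet M ^ (d * k) = if (M:ℤ) ∣ d then (M:ℂ) else 0 := by
  have hterm : ∀ k : ℕ, zet M ^ (d * k) = (zet M ^ d) ^ k := by
    intro k
    rw [zpow_mul, zpow_natCast]
  split_ifs with h
  · have h1 : zet M ^ d = 1 := (zet_zpow_eq_one_iff M hM d).2 h
    simp [hterm, h1]
  · have h1 : zet M ^ d ≠ 1 := fun hh => h ((zet_zpow_eq_one_iff M hM d).1 hh)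
    have := geom_sum_eq h1 M
    simp only [hterm]
    rw [this]
    have : (zet M ^ d) ^ M = 1 := by
      rw [← zpow_natCast _ M, ← zpow_mul, mul_comm, zpow_mul, zpow_natCast,
        (zet_prim M hM).pow_eq_one, one_zpow]
    rw [this, sub_self, zero_div]

lemma DmatInv_mulVec_Dmat (M : ℕ) (hM : M ≠ 0) (v : Fin M → ℂ) :
    (DmatInv M).mulVec ((Dmat M).mulVec v) = v := by
  funext n
  simp only [Matrix.mulVec, dotProduct, DmatInv_apply, Dmat_apply]
  have step1 : ∀ k : Fin M,
      (M:ℂ)⁻¹ * zet M ^ ((n.val : ℤ) * k.val) * ∑ q : Fin M, zet M ^ (-((k.val:ℤ) * q.val)) * v q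
      = ∑ q : Fin M, v q * ((M:ℂ)⁻¹ * zet M ^ (((n.val : ℤ) - q.val) * k.val)) := by
    intro k
    rw [Finset.mul_sum]
    refine Finset.sum_congr rfl fun q _ => ?_
    have hz : zet M ^ ((n.val : ℤ) * k.val) * zet M ^ (-((k.val:ℤ) * q.val))
        = zet M ^ (((n.val : ℤ) - q.val) * k.val) := by
      rw [← zpow_add₀ (zet_ne_zero M)]
      congr 1
      ring
    calc (M:ℂ)⁻¹ * zet M ^ ((n.val : ℤ) * k.val) * (zet M ^ (-((k.val:ℤ) * q.val)) * v q)
        = (zet M ^ ((n.val : ℤ) * k.val) * zet M ^ (-((k.val:ℤ) * q.val))) * ((M:ℂ)⁻¹ * v q) := by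
          ring
      _ = _ := by rw [hz]; ring
  rw [Finset.sum_congr rfl (fun k _ => step1 k), Finset.sum_comm]
  have step2 : ∀ q : Fin M,
      ∑ k : Fin M, v q * ((M:ℂ)⁻¹ * zet M ^ (((n.val : ℤ) - q.val) * k.val))
      = v q * ((M:ℂ)⁻¹ * (if ((M:ℤ) ∣ ((n.val : ℤ) - q.val)) then (M:ℂ) else 0)) := by
    intro q
    rw [← Finset.mul_sum, ← Finset.mul_sum, ← zet_sum M hM ((n.val : ℤ) - q.val),
      ← Fin.sum_univ_eq_sum_range (fun k : ℕ => zet M ^ (((n.val : ℤ) - q.val) * k)) M]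
  rw [Finset.sum_congr rfl (fun q _ => step2 q)]
  have hiff : ∀ q : Fin M, (((M:ℤ) ∣ ((n.val : ℤ) - q.val))) ↔ q = n := by
    intro q
    constructor
    · intro h
      rcases h with ⟨c, hc⟩
      have hn := n.isLt
      have hq := q.isLt
      have hc0 : c = 0 := by nlinarith [hc, Int.ofNat_lt.2 hn, Int.ofNat_lt.2 hq]
      rw [hc0, mul_zero] at hc
      exact Fin.ext (by omega)
    · rintro rfl; simp
  simp only [hiff, mul_ite, mul_zero]
  rw [Finset.sum_ite_eq' Finset.univ n]
  simp only [Finset.mem_univ, if_true]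
  rw [inv_mul_cancel₀ (Nat.cast_ne_zero.2 hM), mul_one]

lemma Dmat_mulVec_real_symm (m : ℕ) (y : Fin (2*(m+1)) → ℝ) (j j' : Fin (2*(m+1)))
    (hdvd : ((2*(m+1) : ℕ) : ℤ) ∣ ((j.val : ℤ) + j'.val)) :
    (starRingEnd ℂ) ((Dmat (2*(m+1))).mulVec (fun k => (y k : ℂ)) j)
      = (Dmat (2*(m+1))).mulVec (fun k => (y k : ℂ)) j' := by
  simp only [Matrix.mulVec, dotProduct, Dmat_apply, map_sum, map_mul, conj_zet_zpow,
    Complex.conj_ofReal]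
  refine Finset.sum_congr rfl fun k _ => ?_
  congr 1
  refine zet_zpow_dvd _ (by omega) ?_
  have : (-(-((j.val:ℤ) * k.val))) - (-((j'.val:ℤ) * k.val)) = ((j.val:ℤ) + j'.val) * k.val := by
    ring
  rw [this]
  exact Dvd.dvd.mul_right hdvd _

lemma PiInv_PiProj_Dmat (m : ℕ) (y : Fin (2*(m+1)) → ℝ) :
    PiInv m (PiProj m ((Dmat (2*(m+1))).mulVec (fun k => (y k : ℂ))))
      = (Dmat (2*(m+1))).mulVec (fun k => (y k : ℂ)) := by
  funext i
  have hN : (0:ℕ) < 2*(m+1) := by omega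
  have hlt := i.isLt
  unfold PiInv PiProj
  split_ifs with h1 h2 h3
  · have h0 : i = ⟨0, hN⟩ := Fin.ext h1
    subst h0
    exact Complex.conj_eq_iff_re.1 (Dmat_mulVec_real_symm m y ⟨0, hN⟩ ⟨0, hN⟩ (by simp))
  · rfl
  · have h0 : i = ⟨m+1, by omega⟩ := Fin.ext h3
    rw [h0]
    exact Complex.conj_eq_iff_re.1 (Dmat_mulVec_real_symm m y ⟨m+1, by omega⟩ ⟨m+1, by omega⟩
      ⟨1, by push_cast; ring⟩)
  · exact Dmat_mulVec_real_symm m y ⟨2*(m+1) - i.val, by omega⟩ i ⟨1, by simp only [Fin.val_mk]; omega⟩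

lemma iRFT_RFT (m : ℕ) (y : Fin (2*(m+1)) → ℝ) :
    iRFT m (RFT m (fun k => (y k : ℂ))) = fun k => (y k : ℂ) := by
  unfold iRFT RFT
  rw [PiInv_PiProj_Dmat]
  exact DmatInv_mulVec_Dmat _ (by omega) _

noncomputable def wght (m : ℕ) (k : Fin (m+2)) : ℂ :=
  if k.val = 0 ∨ k.val = m+1 then 1 else 2

lemma conj_wght (m : ℕ) (k : Fin (m+2)) : (starRingEnd ℂ) (wght m k) = wght m k := by
  unfold wght; split_ifs <;> exact Complex.conj_eq_iff_im.2 (by norm_num)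

lemma wght_ne_zero (m : ℕ) (k : Fin (m+2)) : wght m k ≠ 0 := by
  unfold wght; split_ifs <;> norm_num

noncomputable def mcoef (m : ℕ) (n : Fin (2*(m+1))) (k : Fin (m+2)) : ℂ :=
  wght m k / ((2*(2*(m+1)) : ℕ) : ℂ) * zet (2*(m+1)) ^ ((n.val : ℤ) * k.val)

lemma conj_mcoef (m : ℕ) (n : Fin (2*(m+1))) (k : Fin (m+2)) :
    (starRingEnd ℂ) (mcoef m n k)
      = wght m k / ((2*(2*(m+1)) : ℕ) : ℂ) * zet (2*(m+1)) ^ (-((n.val : ℤ) * k.val)) := by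
  unfold mcoef
  rw [map_mul, map_div₀, conj_wght, conj_zet_zpow, map_natCast]

noncomputable def padv (m : ℕ) (Z : Fin (m+2) → ℂ) (k : ℕ) : ℂ :=
  if h : k < m+2 then wght m ⟨k,h⟩ * Z ⟨k,h⟩ else 0

lemma padv_of_lt (m : ℕ) (Z : Fin (m+2) → ℂ) (k : ℕ) (h : k < m+2) :
    padv m Z k = wght m ⟨k,h⟩ * Z ⟨k,h⟩ := dif_pos h

lemma padv_of_ge (m : ℕ) (Z : Fin (m+2) → ℂ) (k : ℕ) (h : ¬ k < m+2) :
    padv m Z k = 0 := dif_neg h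

lemma neg_val_cases (m : ℕ) (k : Fin (2*(m+1))) :
    (-k).val + k.val = 0 ∨ (-k).val + k.val = 2*(m+1) := by
  have hneg := Fin.coe_neg k
  have hk := k.isLt
  rcases Nat.eq_zero_or_pos k.val with h|h
  · left
    rw [hneg, h, Nat.sub_zero, Nat.mod_self]
  · right
    have hlt : 2*(m+1) - k.val < 2*(m+1) := by omega
    rw [hneg, Nat.mod_eq_of_lt hlt]
    omega

lemma PiInv_eq_pad (m : ℕ) (Z : Fin (m+2) → ℂ) (k : Fin (2*(m+1))) :
    PiInv m Z k = (padv m Z k.val + (starRingEnd ℂ) (padv m Z (-k).val)) / 2 := by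
  have hk := k.isLt
  have hneg := neg_val_cases m k
  have hk2 := (-k).isLt
  unfold PiInv
  split_ifs with h1 h2 h3
  · -- k.val = 0
    have h0 : (-k).val = 0 := by omega
    rw [h0, h1, padv_of_lt m Z 0 (by omega)]
    have hw : wght m ⟨0, by omega⟩ = 1 := by unfold wght; simp
    rw [hw, one_mul, Complex.add_conj]
    push_cast; ring
  · -- 0 < k.val < m+1
    have h0 : (-k).val = 2*(m+1) - k.val := by omega
    rw [h0, padv_of_lt m Z k.val (by omega), padv_of_ge m Z _ (by omega), map_zero]
    have hw : wght m ⟨k.val, by omega⟩ = 2 := by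
      unfold wght; rw [if_neg (by simp only [Fin.val_mk]; omega)]
    rw [hw]
    ring
  · -- k.val = m+1
    have h0 : (-k).val = m+1 := by omega
    rw [h0, h3, padv_of_lt m Z (m+1) (by omega)]
    have hw : wght m ⟨m+1, by omega⟩ = 1 := by unfold wght; simp
    rw [hw, one_mul, Complex.add_conj]
    push_cast; ring
  · -- k.val > m+1
    have h0 : (-k).val = 2*(m+1) - k.val := by omega
    rw [h0, padv_of_ge m Z k.val (by omega), padv_of_lt m Z _ (by omega)]
    have hw : wght m ⟨2*(m+1) - k.val, by omega⟩ = 2 := by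
      unfold wght; rw [if_neg (by simp only [Fin.val_mk]; omega)]
    rw [hw, map_mul]
    have h2c : (starRingEnd ℂ) (2:ℂ) = 2 := Complex.conj_eq_iff_im.2 (by norm_num)
    rw [h2c]
    ring

lemma iRFT_eq_sum (m : ℕ) (Z : Fin (m+2) → ℂ) (n : Fin (2*(m+1))) :
    iRFT m Z n = ∑ k : Fin (m+2),
      (mcoef m n k * Z k + (starRingEnd ℂ) (mcoef m n k * Z k)) := by
  haveI : NeZero (2*(m+1)) := ⟨by omega⟩
  have hN : (2*(m+1) : ℕ) ≠ 0 := by omega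
  set M : ℂ := ((2*(m+1) : ℕ) : ℂ) with hM
  have expand : iRFT m Z n = ∑ k : Fin (2*(m+1)),
      M⁻¹ * zet (2*(m+1)) ^ ((n.val:ℤ) * k.val)
        * ((padv m Z k.val + (starRingEnd ℂ) (padv m Z (-k).val))/2) := by
    unfold iRFT
    simp only [Matrix.mulVec, dotProduct, DmatInv_apply]
    exact Finset.sum_congr rfl fun k _ => by rw [PiInv_eq_pad]
  rw [expand]
  have hsplit : ∀ k : Fin (2*(m+1)),
      M⁻¹ * zet (2*(m+1)) ^ ((n.val:ℤ) * k.val)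
        * ((padv m Z k.val + (starRingEnd ℂ) (padv m Z (-k).val))/2)
      = M⁻¹/2 * zet (2*(m+1)) ^ ((n.val:ℤ) * k.val) * padv m Z k.val
        + M⁻¹/2 * zet (2*(m+1)) ^ ((n.val:ℤ) * k.val)
            * (starRingEnd ℂ) (padv m Z (-k).val) := fun k => by ring
  rw [Finset.sum_congr rfl (fun k _ => hsplit k), Finset.sum_add_distrib]
  have h2 : ∑ k : Fin (2*(m+1)), M⁻¹/2 * zet (2*(m+1)) ^ ((n.val:ℤ) * k.val)
        * (starRingEnd ℂ) (padv m Z (-k).val)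
      = ∑ k : Fin (2*(m+1)), M⁻¹/2 * zet (2*(m+1)) ^ (-((n.val:ℤ) * k.val))
        * (starRingEnd ℂ) (padv m Z k.val) := by
    rw [← Equiv.sum_comp (Equiv.neg (Fin (2*(m+1))))
      (fun k => M⁻¹/2 * zet (2*(m+1)) ^ (-((n.val:ℤ) * k.val))
        * (starRingEnd ℂ) (padv m Z k.val))]
    refine Finset.sum_congr rfl fun k _ => ?_
    have hcn := neg_val_cases m k
    have h0 : (k.val + (-k).val = 0) ∨ (k.val + (-k).val = 2*(m+1)) := by
      omega
    have hz : zet (2*(m+1)) ^ ((n.val:ℤ) * k.val)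
        = zet (2*(m+1)) ^ (-((n.val:ℤ) * ((-k).val:ℤ))) := by
      refine zet_zpow_dvd _ hN ?_
      have he : ((n.val:ℤ) * k.val) - (-((n.val:ℤ) * ((-k).val:ℤ)))
          = (n.val:ℤ) * ((k.val:ℤ) + ((-k).val:ℤ)) := by ring
      rw [he]
      rcases h0 with h|h
      · have hz' : ((k.val:ℤ) + ((-k).val:ℤ)) = 0 := by exact_mod_cast h
        rw [hz', mul_zero]
        exact dvd_zero _
      · have hz' : ((k.val:ℤ) + ((-k).val:ℤ)) = ((2*(m+1):ℕ):ℤ) := by exact_mod_cast h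
        rw [hz']
        exact dvd_mul_left _ _
    simp only [Equiv.neg_apply]
    rw [hz]
  rw [h2, ← Finset.sum_add_distrib]
  -- collapse the sum over Fin (2*(m+1)) to a sum over Fin (m+2)
  set G : ℕ → ℂ := fun k => M⁻¹/2 * zet (2*(m+1)) ^ ((n.val:ℤ) * k) * padv m Z k
      + M⁻¹/2 * zet (2*(m+1)) ^ (-((n.val:ℤ) * k)) * (starRingEnd ℂ) (padv m Z k) with hG
  have hbig : ∑ k : Fin (2*(m+1)),
      (M⁻¹/2 * zet (2*(m+1)) ^ ((n.val:ℤ) * k.val) * padv m Z k.val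
        + M⁻¹/2 * zet (2*(m+1)) ^ (-((n.val:ℤ) * k.val)) * (starRingEnd ℂ) (padv m Z k.val))
      = ∑ k ∈ Finset.range (2*(m+1)), G k := Fin.sum_univ_eq_sum_range G (2*(m+1))
  rw [hbig]
  rw [← Finset.sum_subset (Finset.range_subset_range.2 (show m+2 ≤ 2*(m+1) by omega))
    (fun k _ hk2 => by
      have : ¬ (k < m+2) := fun hc => hk2 (Finset.mem_range.2 hc)
      simp only [hG, padv, dif_neg this, map_zero, mul_zero, add_zero])]
  rw [← Fin.sum_univ_eq_sum_range G (m+2)]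
  refine Finset.sum_congr rfl fun k _ => ?_
  have hpad : padv m Z k.val = wght m k * Z k := by
    unfold padv
    rw [dif_pos k.isLt]
  simp only [hG, hpad, map_mul, conj_mcoef, conj_wght]
  unfold mcoef
  have hcast : ((2*(2*(m+1)) : ℕ) : ℂ) = 2 * M := by rw [hM]; push_cast; ring
  rw [hcast]
  have hdiv : ∀ w' : ℂ, w' / (2*M) = M⁻¹/2 * w' := fun w' => by
    rw [div_eq_mul_inv, mul_inv]
    ring
  rw [hdiv]
  ring

lemma iRFT_im_eq_zero (m : ℕ) (Z : Fin (m+2) → ℂ) (n : Fin (2*(m+1))) :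
    (iRFT m Z n).im = 0 := by
  rw [iRFT_eq_sum, Complex.im_sum]
  refine Finset.sum_eq_zero fun k _ => ?_
  simp only [Complex.add_im, Complex.conj_im]
  ring

def nIdx (a b : ℕ) (t : Fin (2*(b+1))) : Fin (2*((a+b+1)+1)) :=
  ⟨2*(a+1)+t.val, by have := t.isLt; omega⟩

lemma RFT_apply (a : ℕ) (x : Fin (2*(a+1)) → ℝ) (j : Fin (a+2)) :
    RFT a (fun k => (x k : ℂ)) j
      = ∑ p : Fin (2*(a+1)), zet (2*(a+1)) ^ (-((j.val:ℤ) * p.val)) * (x p : ℂ) := by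
  unfold RFT PiProj
  simp only [Matrix.mulVec, dotProduct, Dmat_apply]

lemma conj_RFT_apply (a : ℕ) (x : Fin (2*(a+1)) → ℝ) (j : Fin (a+2)) :
    (starRingEnd ℂ) (RFT a (fun k => (x k : ℂ)) j)
      = ∑ p : Fin (2*(a+1)), zet (2*(a+1)) ^ ((j.val:ℤ) * p.val) * (x p : ℂ) := by
  rw [RFT_apply, map_sum]
  refine Finset.sum_congr rfl fun p _ => ?_
  rw [map_mul, conj_zet_zpow, neg_neg, Complex.conj_ofReal]

noncomputable def Gco (a b : ℕ) (W : Matrix (Fin (a+b+3)) (Fin (a+2)) ℂ)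
    (t : Fin (2*(b+1))) (j : Fin (a+2)) : ℂ :=
  ∑ k : Fin (a+b+3), mcoef (a+b+1) (nIdx a b t) k * W k j

noncomputable def Sco (a b : ℕ) (W : Matrix (Fin (a+b+3)) (Fin (a+2)) ℂ)
    (t : Fin (2*(b+1))) (p : Fin (2*(a+1))) : ℂ :=
  ∑ j : Fin (a+2), Gco a b W t j * zet (2*(a+1)) ^ (-((j.val:ℤ) * p.val))

lemma fitsT_eq (a b : ℕ) (W : Matrix (Fin (a+b+3)) (Fin (a+2)) ℂ)
    (c : Fin (a+b+3) → ℂ) (x : Fin (2*(a+1)) → ℝ) (t : Fin (2*(b+1))) :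
    fitsT a b W c x t
      = ∑ p : Fin (2*(a+1)), (x p : ℂ) *
          (Sco a b W t p + (starRingEnd ℂ) (Sco a b W t p))
        + iRFT (a+b+1) c (nIdx a b t) := by
  have hfits : fitsT a b W c x t
      = iRFT (a+b+1) (W.mulVec (RFT a fun k => ((x k : ℝ) : ℂ)) + c) (nIdx a b t) := rfl
  rw [hfits, iRFT_eq_sum, iRFT_eq_sum]
  set u : Fin (a+2) → ℂ := RFT a fun k => ((x k : ℝ) : ℂ) with hu
  set n : Fin (2*((a+b+1)+1)) := nIdx a b t with hn
  have h1 : ∑ k : Fin ((a+b+1)+2),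
      (mcoef (a+b+1) n k * (W.mulVec u + c) k
        + (starRingEnd ℂ) (mcoef (a+b+1) n k * (W.mulVec u + c) k))
      = ((∑ k : Fin ((a+b+1)+2), mcoef (a+b+1) n k * (W.mulVec u) k)
          + (starRingEnd ℂ) (∑ k : Fin ((a+b+1)+2), mcoef (a+b+1) n k * (W.mulVec u) k))
        + ∑ k : Fin ((a+b+1)+2),
            (mcoef (a+b+1) n k * c k + (starRingEnd ℂ) (mcoef (a+b+1) n k * c k)) := by
    simp only [Pi.add_apply, mul_add, map_add, map_sum, Finset.sum_add_distrib]
    ring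
  rw [h1]
  congr 1
  have key : ∑ k : Fin ((a+b+1)+2), mcoef (a+b+1) n k * (W.mulVec u) k
      = ∑ p : Fin (2*(a+1)), (x p : ℂ) * Sco a b W t p := by
    have e1 : ∀ k, (W.mulVec u) k = ∑ j : Fin (a+2), W k j * u j := fun k => rfl
    calc ∑ k : Fin ((a+b+1)+2), mcoef (a+b+1) n k * (W.mulVec u) k
        = ∑ k : Fin ((a+b+1)+2), ∑ j : Fin (a+2), mcoef (a+b+1) n k * W k j * u j := by
          refine Finset.sum_congr rfl fun k _ => ?_
          rw [e1, Finset.mul_sum]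
          exact Finset.sum_congr rfl fun j _ => by ring
      _ = ∑ j : Fin (a+2), Gco a b W t j * u j := by
          rw [Finset.sum_comm]
          refine Finset.sum_congr rfl fun j _ => ?_
          rw [Gco, Finset.sum_mul]
      _ = ∑ j : Fin (a+2), ∑ p : Fin (2*(a+1)),
            Gco a b W t j * zet (2*(a+1)) ^ (-((j.val:ℤ) * p.val)) * (x p : ℂ) := by
          refine Finset.sum_congr rfl fun j _ => ?_
          rw [hu, RFT_apply, Finset.mul_sum]
          exact Finset.sum_congr rfl fun p _ => by ring
      _ = ∑ p : Fin (2*(a+1)), (x p : ℂ) * Sco a b W t p := by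
          rw [Finset.sum_comm]
          refine Finset.sum_congr rfl fun p _ => ?_
          rw [Sco, Finset.mul_sum]
          exact Finset.sum_congr rfl fun j _ => by ring
  rw [key, map_sum]
  rw [← Finset.sum_add_distrib]
  refine Finset.sum_congr rfl fun p _ => ?_
  rw [map_mul, Complex.conj_ofReal]
  ring

lemma fits_eq_iRFT (a b : ℕ) (W : Matrix (Fin (a+b+3)) (Fin (a+2)) ℂ)
    (c : Fin (a+b+3) → ℂ) (x : Fin (2*(a+1)) → ℝ) (i : Fin (2*(a+b+2))) :
    fits a b W c x i
      = iRFT (a+b+1) (W.mulVec (RFT a fun k => ((x k : ℝ) : ℂ)) + c) i := rfl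

lemma fits_im (a b : ℕ) (W : Matrix (Fin (a+b+3)) (Fin (a+2)) ℂ)
    (c : Fin (a+b+3) → ℂ) (x : Fin (2*(a+1)) → ℝ) (i : Fin (2*(a+b+2))) :
    (fits a b W c x i).im = 0 := by
  rw [fits_eq_iRFT]
  exact iRFT_im_eq_zero _ _ _

lemma forward_dir (a b : ℕ) (W : Matrix (Fin (a+b+3)) (Fin (a+2)) ℂ)
    (c : Fin (a+b+3) → ℂ) :
    ∃ (A : Matrix (Fin (2*(b+1))) (Fin (2*(a+1))) ℝ) (bv : Fin (2*(b+1)) → ℝ),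
      ∀ x t, fitsT a b W c x t = ((A.mulVec x t + bv t : ℝ) : ℂ) := by
  refine ⟨fun t p => 2 * (Sco a b W t p).re,
    fun t => (iRFT (a+b+1) c (nIdx a b t)).re, fun x t => ?_⟩
  rw [fitsT_eq]
  have hbias : iRFT (a+b+1) c (nIdx a b t)
      = (((iRFT (a+b+1) c (nIdx a b t)).re : ℝ) : ℂ) := by
    refine Complex.ext (by simp) ?_
    rw [iRFT_im_eq_zero]
    simp
  have hterm : ∀ p : Fin (2*(a+1)),
      (x p : ℂ) * (Sco a b W t p + (starRingEnd ℂ) (Sco a b W t p))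
      = ((2 * (Sco a b W t p).re * x p : ℝ) : ℂ) := by
    intro p
    rw [Complex.add_conj]
    push_cast
    ring
  rw [Finset.sum_congr rfl (fun p _ => hterm p)]
  rw [hbias]
  have hmv : (Matrix.mulVec (fun t p => 2 * (Sco a b W t p).re) x) t
      = ∑ p : Fin (2*(a+1)), 2 * (Sco a b W t p).re * x p := rfl
  rw [hmv]
  push_cast
  congr 1

lemma sum_fin_restrict {M : Type*} [AddCommMonoid M] (r s : ℕ) (hrs : r ≤ s) (F : Fin r → M) :
    (∑ k : Fin s, (if hk : k.val < r then F ⟨k.val, hk⟩ else 0)) = ∑ q : Fin r, F q := by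
  set G : ℕ → M := fun k => if hk : k < r then F ⟨k, hk⟩ else 0 with hG
  calc (∑ k : Fin s, G k.val) = ∑ k ∈ Finset.range s, G k := Fin.sum_univ_eq_sum_range G s
    _ = ∑ k ∈ Finset.range r, G k := by
        refine (Finset.sum_subset (Finset.range_subset_range.2 hrs) fun k _ hk2 => ?_).symm
        have : ¬ (k < r) := fun hc => hk2 (Finset.mem_range.2 hc)
        simp only [hG, dif_neg this]
    _ = ∑ q : Fin r, G q.val := (Fin.sum_univ_eq_sum_range G r).symm
    _ = ∑ q : Fin r, F q := by
        refine Finset.sum_congr rfl fun q _ => ?_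
        simp only [hG, dif_pos q.isLt, Fin.eta]

/-- the Vandermonde matrix used to solve for the weight columns -/
noncomputable def vmat (a b : ℕ) : Matrix (Fin (2*(b+1))) (Fin (2*(b+1))) ℂ :=
  Matrix.vandermonde (fun t => zet (2*((a+b+1)+1)) ^ (nIdx a b t).val)

lemma vmat_det_ne_zero (a b : ℕ) : (vmat a b).det ≠ 0 := by
  rw [vmat, Matrix.det_vandermonde_ne_zero_iff]
  intro t t' h
  have hprim := zet_prim (2*((a+b+1)+1)) (by omega)
  have h1 : (nIdx a b t).val = (nIdx a b t').val :=
    hprim.pow_inj (nIdx a b t).isLt (nIdx a b t').isLt h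
  have h2 : (nIdx a b t).val = 2*(a+1) + t.val := rfl
  have h3 : (nIdx a b t').val = 2*(a+1) + t'.val := rfl
  exact Fin.ext (by omega)

/-- solve for a coefficient vector realizing prescribed `mcoef`-sums -/
noncomputable def sol (a b : ℕ) (h : Fin (2*(b+1)) → ℂ) : Fin ((a+b+1)+2) → ℂ :=
  fun k => if hk : k.val < 2*(b+1)
    then ((2*(2*((a+b+1)+1)) : ℕ) : ℂ) / wght (a+b+1) k * ((vmat a b)⁻¹.mulVec h) ⟨k.val, hk⟩
    else 0

lemma sol_spec (a b : ℕ) (hT : 2*(b+1) ≤ (a+b+1)+2) (h : Fin (2*(b+1)) → ℂ)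
    (t : Fin (2*(b+1))) :
    ∑ k : Fin ((a+b+1)+2), mcoef (a+b+1) (nIdx a b t) k * sol a b h k = h t := by
  have hterm : ∀ k : Fin ((a+b+1)+2),
      mcoef (a+b+1) (nIdx a b t) k * sol a b h k
      = (if hk : k.val < 2*(b+1)
          then vmat a b t ⟨k.val, hk⟩ * ((vmat a b)⁻¹.mulVec h) ⟨k.val, hk⟩ else 0) := by
    intro k
    unfold sol
    split_ifs with hk
    · have hwz := wght_ne_zero (a+b+1) k
      have hNz : ((2*(2*((a+b+1)+1)) : ℕ) : ℂ) ≠ 0 := Nat.cast_ne_zero.2 (by omega)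
      have hv : vmat a b t ⟨k.val, hk⟩
          = zet (2*((a+b+1)+1)) ^ (((nIdx a b t).val : ℤ) * (k.val : ℤ)) := by
        rw [vmat, Matrix.vandermonde]
        show (zet (2*((a+b+1)+1)) ^ (nIdx a b t).val) ^ ((⟨k.val, hk⟩ : Fin (2*(b+1))).val) = _
        rw [← pow_mul, ← zpow_natCast]
        congr 1
        all_goals (push_cast; ring)
      have h1 : wght (a+b+1) k / ((2*(2*((a+b+1)+1)) : ℕ) : ℂ)
          * (((2*(2*((a+b+1)+1)) : ℕ) : ℂ) / wght (a+b+1) k) = 1 := by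
        rw [div_mul_div_comm, mul_comm]
        exact div_self (mul_ne_zero hNz hwz)
      calc mcoef (a+b+1) (nIdx a b t) k * (((2*(2*((a+b+1)+1)) : ℕ) : ℂ) / wght (a+b+1) k
            * ((vmat a b)⁻¹.mulVec h) ⟨k.val, hk⟩)
          = (wght (a+b+1) k / ((2*(2*((a+b+1)+1)) : ℕ) : ℂ)
              * (((2*(2*((a+b+1)+1)) : ℕ) : ℂ) / wght (a+b+1) k))
            * (zet (2*((a+b+1)+1)) ^ (((nIdx a b t).val : ℤ) * (k.val : ℤ))
              * ((vmat a b)⁻¹.mulVec h) ⟨k.val, hk⟩) := by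
            rw [mcoef]; ring
        _ = vmat a b t ⟨k.val, hk⟩ * ((vmat a b)⁻¹.mulVec h) ⟨k.val, hk⟩ := by
            rw [h1, one_mul, hv]
    · rw [mul_zero]
  rw [Finset.sum_congr rfl fun k _ => hterm k]
  rw [sum_fin_restrict (2*(b+1)) ((a+b+1)+2) hT
    (fun q => vmat a b t q * ((vmat a b)⁻¹.mulVec h) q)]
  have : ∑ q : Fin (2*(b+1)), vmat a b t q * ((vmat a b)⁻¹.mulVec h) q
      = (vmat a b).mulVec ((vmat a b)⁻¹.mulVec h) t := rfl
  rw [this, Matrix.mulVec_mulVec,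
    Matrix.mul_nonsing_inv _ (isUnit_iff_ne_zero.2 (vmat_det_ne_zero a b)),
    Matrix.one_mulVec]

lemma converse_dir (a b : ℕ) (hLT : 2 * (a + 1) ≥ 2 * (b + 1) - 2)
    (A : Matrix (Fin (2*(b+1))) (Fin (2*(a+1))) ℝ) (bv : Fin (2*(b+1)) → ℝ) :
    ∃ (W : Matrix (Fin (a + b + 3)) (Fin (a + 2)) ℂ) (c : Fin (a + b + 3) → ℂ),
      ∀ x t, fitsT a b W c x t = ((A.mulVec x t + bv t : ℝ) : ℂ) := by
  have hT : 2*(b+1) ≤ (a+b+1)+2 := by omega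
  set H : Fin (2*(b+1)) → Fin (a+2) → ℂ := fun t j =>
    wght a j / ((2*(2*(a+1)) : ℕ) : ℂ)
      * (starRingEnd ℂ) (RFT a (fun q => ((A t q : ℝ) : ℂ)) j) with hH
  refine ⟨fun k j => sol a b (fun t => H t j) k,
    sol a b (fun t => ((bv t / 2 : ℝ) : ℂ)), fun x t => ?_⟩
  refine (fitsT_eq a b _ _ x t).trans ?_
  have hG : ∀ j : Fin (a+2),
      Gco a b (fun k j => sol a b (fun t' => H t' j) k) t j = H t j := fun j =>
    sol_spec a b hT (fun t' => H t' j) t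
  have hbias : iRFT (a+b+1) (sol a b (fun t' => ((bv t' / 2 : ℝ) : ℂ))) (nIdx a b t)
      = ((bv t : ℝ) : ℂ) := by
    rw [iRFT_eq_sum, Finset.sum_add_distrib, ← map_sum,
      sol_spec a b hT (fun t' => ((bv t' / 2 : ℝ) : ℂ)) t, Complex.conj_ofReal]
    push_cast
    ring
  have hS : ∀ p : Fin (2*(a+1)),
      Sco a b (fun k j => sol a b (fun t' => H t' j) k) t p
        + (starRingEnd ℂ) (Sco a b (fun k j => sol a b (fun t' => H t' j) k) t p)
      = ((A t p : ℝ) : ℂ) := by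
    intro p
    set Z : Fin (a+2) → ℂ := RFT a (fun q => ((A t q : ℝ) : ℂ)) with hZ
    have hrec : iRFT a Z p = ((A t p : ℝ) : ℂ) := by
      rw [hZ]
      exact congrFun (iRFT_RFT a (fun q => A t q)) p
    have hsum := iRFT_eq_sum a Z p
    have hSco : Sco a b (fun k j => sol a b (fun t' => H t' j) k) t p
        = (starRingEnd ℂ) (∑ j : Fin (a+2), mcoef a p j * Z j) := by
      unfold Sco
      rw [map_sum]
      refine Finset.sum_congr rfl fun j _ => ?_
      rw [hG j, map_mul, conj_mcoef]
      simp only [hH]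
      rw [show (-((p.val:ℤ) * j.val)) = (-((j.val:ℤ) * p.val)) by ring]
      ring
    calc Sco a b (fun k j => sol a b (fun t' => H t' j) k) t p
          + (starRingEnd ℂ) (Sco a b (fun k j => sol a b (fun t' => H t' j) k) t p)
        = (∑ j : Fin (a+2), mcoef a p j * Z j)
          + (starRingEnd ℂ) (∑ j : Fin (a+2), mcoef a p j * Z j) := by
          rw [hSco, Complex.conj_conj]
          ring
      _ = iRFT a Z p := by
          rw [hsum, Finset.sum_add_distrib, ← map_sum]
      _ = ((A t p : ℝ) : ℂ) := hrec
  have hterm : ∀ p : Fin (2*(a+1)),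
      (x p : ℂ) * (Sco a b (fun k j => sol a b (fun t' => H t' j) k) t p
        + (starRingEnd ℂ) (Sco a b (fun k j => sol a b (fun t' => H t' j) k) t p))
      = ((A t p * x p : ℝ) : ℂ) := by
    intro p
    rw [hS p]
    push_cast
    ring
  rw [Finset.sum_congr rfl fun p _ => hterm p, hbias]
  have hmv : A.mulVec x t = ∑ p : Fin (2*(a+1)), A t p * x p := rfl
  rw [hmv]
  push_cast
  ring


/-- for even `L = 2·(a+1)` and `T = 2·(b+1)` with `L ≥ T − 2`, the FITS
model class (without low-pass filter) is exactly the set of affine maps `ℝ^L → ℝ^T`: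
(i) every FITS model has real outputs and equals `x ↦ Ax + b`;
(ii) every affine map `x ↦ Ax + b` is realized by some FITS model. -/
theorem fits_model_class (a b : ℕ) (hLT : 2 * (a + 1) ≥ 2 * (b + 1) - 2) :
    (∀ (W : Matrix (Fin (a + b + 3)) (Fin (a + 2)) ℂ) (c : Fin (a + b + 3) → ℂ),
      (∀ (x : Fin (2 * (a + 1)) → ℝ) (i : Fin (2 * (a + b + 2))),
        (fits a b W c x i).im = 0) ∧
      ∃ (A : Matrix (Fin (2 * (b + 1))) (Fin (2 * (a + 1))) ℝ) (bv : Fin (2 * (b + 1)) → ℝ),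
        ∀ x t, fitsT a b W c x t = ((A.mulVec x t + bv t : ℝ) : ℂ)) ∧
    (∀ (A : Matrix (Fin (2 * (b + 1))) (Fin (2 * (a + 1))) ℝ) (bv : Fin (2 * (b + 1)) → ℝ),
      ∃ (W : Matrix (Fin (a + b + 3)) (Fin (a + 2)) ℂ) (c : Fin (a + b + 3) → ℂ),
        ∀ x t, fitsT a b W c x t = ((A.mulVec x t + bv t : ℝ) : ℂ)) := by
  exact ⟨fun W c => ⟨fits_im a b W c, forward_dir a b W c⟩,
    fun A bv => converse_dir a b hLT A bv⟩
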